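/- Let p be a prime, n ≥ 1, and a_1, …, a_n ∈ ℚ_p with |a_1|_p > 1 and |a_j|_p ≤ |a_1|_p for all 2 ≤ j ≤ n. Define the sequence (α_k) in ℚ_p by α_0 = a_1 and α_{k+1} = a_1 + a_2/α_k + a_3/α_k² + ⋯ + a_n/α_k^{n−1}. Then the sequence is well defined (α_k ≠ 0 for all k) and |α_k|_p = |a_1|_p for every k ≥ 0. -/

import Mathlib

lemma padic_sum_norm_le {p : ℕ} [Fact p.Prime] {ι : Type*} (s : Finset ι)
    (f : ι → ℚ_[p]) {c : ℝ} (hc : 0 ≤ c) (h : ∀ i ∈ s, ‖f i‖ ≤ c) :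
    ‖∑ i ∈ s, f i‖ ≤ c := by
  classical
  induction s using Finset.induction with
  | empty => simpa using hc
  | insert a t hx ih =>
    rw [Finset.sum_insert hx]
    refine le_trans (Padic.nonarchimedean _ _) (max_le ?_ ?_)
    · exact h a (Finset.mem_insert_self _ _)
    · exact ih fun i hi => h i (Finset.mem_insert_of_mem hi)

/-- For `a_1, …, a_n ∈ ℚ_p` with `|a_1|_p > 1` and `|a_j|_p ≤ |a_1|_p` for
`2 ≤ j ≤ n`, the sequence `α_0 = a_1`, `α_{k+1} = a_1 + a_2/α_k + ⋯ + a_n/α_k^(n−1)` is well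
defined (`α_k ≠ 0`) and satisfies `|α_k|_p = |a_1|_p` for all `k`. -/
theorem padic_recurrence_norm_invariant (p : ℕ) [Fact p.Prime] (n : ℕ) (hn : 1 ≤ n)
    (a : ℕ → ℚ_[p]) (ha1 : 1 < ‖a 1‖)
    (haj : ∀ j, 2 ≤ j → j ≤ n → ‖a j‖ ≤ ‖a 1‖)
    (α : ℕ → ℚ_[p]) (h0 : α 0 = a 1)
    (hrec : ∀ k, α (k + 1) = ∑ j ∈ Finset.Icc 1 n, a j / α k ^ (j - 1)) :
    ∀ k, α k ≠ 0 ∧ ‖α k‖ = ‖a 1‖ := by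
  have ha1pos : (0:ℝ) < ‖a 1‖ := lt_trans one_pos ha1
  have ha1ne : a 1 ≠ 0 := by
    intro h; rw [h, norm_zero] at ha1pos; exact lt_irrefl _ ha1pos
  intro k
  induction k with
  | zero => exact ⟨h0 ▸ ha1ne, by rw [h0]⟩
  | succ k ih =>
    obtain ⟨hk0, hknorm⟩ := ih
    -- split off the j = 1 term
    have hsplit : Finset.Icc 1 n = insert 1 (Finset.Icc 2 n) := by
      rw [Finset.Icc_eq_cons_Ico hn]
      ext x
      simp only [Finset.mem_cons, Finset.mem_insert, Finset.mem_Ico, Finset.mem_Icc]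
      omega
    have hrest : ‖∑ j ∈ Finset.Icc 2 n, a j / α k ^ (j - 1)‖ ≤ 1 := by
      apply padic_sum_norm_le _ _ zero_le_one
      intro j hj
      rw [Finset.mem_Icc] at hj
      rw [norm_div, norm_pow, hknorm]
      rw [div_le_one (pow_pos ha1pos _)]
      calc ‖a j‖ ≤ ‖a 1‖ := haj j hj.1 hj.2
        _ = ‖a 1‖ ^ 1 := (pow_one _).symm
        _ ≤ ‖a 1‖ ^ (j - 1) := pow_le_pow_right₀ (le_of_lt ha1) (by omega)
    have hrestlt : ‖∑ j ∈ Finset.Icc 2 n, a j / α k ^ (j - 1)‖ < ‖a 1‖ :=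
      lt_of_le_of_lt hrest ha1
    have heq : α (k + 1) = a 1 + ∑ j ∈ Finset.Icc 2 n, a j / α k ^ (j - 1) := by
      rw [hrec k, hsplit, Finset.sum_insert (by simp)]
      simp
    have hne : ‖a 1‖ ≠ ‖∑ j ∈ Finset.Icc 2 n, a j / α k ^ (j - 1)‖ :=
      (ne_of_lt hrestlt).symm
    have hnorm : ‖α (k + 1)‖ = ‖a 1‖ := by
      rw [heq, Padic.add_eq_max_of_ne hne, max_eq_left (le_of_lt hrestlt)]
    refine ⟨?_, hnorm⟩
    intro h
    rw [h, norm_zero] at hnorm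
    exact ha1pos.ne hnorm
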